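/- Let C be a square integer matrix with nonzero determinant and cokernel of exponent n₁. Then the number of solutions x ∈ (ℤ/n₁)^k to Cx = 0 equals |det C| (when all invariant factors of the cokernel divide n₁), i.e., the kernel of C mod n₁ is isomorphic to the cokernel ℤ^k/Cℤ^k. -/

import Mathlib

open Matrix

/-- Cardinality of a cokernel of a full-rank submodule of `ℤ^k` is the determinant. -/
lemma aux_index {k : ℕ} (N : Submodule ℤ (Fin k → ℤ)) (e : (Fin k → ℤ) ≃ₗ[ℤ] N) :
    (LinearMap.det ((Submodule.subtype N) ∘ₗ (e : (Fin k → ℤ) →ₗ[ℤ] N))).natAbs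
      = N.toAddSubgroup.index := by
  classical
  obtain ⟨n, snf⟩ := N.smithNormalForm (Module.Basis.ofEquivFun (LinearEquiv.refl ℤ (Fin k → ℤ)))
  have hn : n = k := by
    have hc := card_eq_of_linearEquiv ℤ (snf.bN.equivFun.symm.trans e.symm)
    simpa using hc
  subst hn
  obtain ⟨bM, bN, f, a, hsnf⟩ := snf
  have hidx : N.toAddSubgroup.index = ∏ i, (a i).natAbs := by
    rw [(Module.Basis.SmithNormalForm.mk bM bN f a hsnf).toAddSubgroup_index_eq_ite]
    simp [Ideal.span_singleton_toAddSubgroup_eq_zmultiples, Int.index_zmultiples]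
  have hσ : Function.Bijective f :=
    (Fintype.bijective_iff_injective_and_card f).2 ⟨f.injective, by simp⟩
  set σ : Fin n ≃ Fin n := Equiv.ofBijective f hσ with hσdef
  set e' : (Fin n → ℤ) ≃ₗ[ℤ] N := bM.equiv (bN.reindex σ) (Equiv.refl _) with he'
  set g : (Fin n → ℤ) →ₗ[ℤ] (Fin n → ℤ) :=
    (Submodule.subtype N) ∘ₗ (e' : (Fin n → ℤ) →ₗ[ℤ] N) with hg
  have hga : ∀ i, g (bM i) = a (σ.symm i) • bM i := by
    intro i
    have h1 : e' (bM i) = (bN.reindex σ) i := by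
      rw [he', Module.Basis.equiv_apply, Equiv.refl_apply]
    have h2 : ((bN.reindex σ) i : Fin n → ℤ) = a (σ.symm i) • bM (f (σ.symm i)) := by
      rw [Module.Basis.reindex_apply, hsnf]
    have h3 : f (σ.symm i) = i := σ.apply_symm_apply i
    rw [hg, LinearMap.comp_apply, LinearEquiv.coe_coe, h1]
    rw [Submodule.subtype_apply, h2, h3]
  have hdetg : LinearMap.det g = ∏ i, a i := by
    have hmat : LinearMap.toMatrix bM bM g = Matrix.diagonal (fun i => a (σ.symm i)) := by
      ext i j
      rw [LinearMap.toMatrix_apply, hga, _root_.map_smul, Module.Basis.repr_self, Finsupp.smul_single,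
        smul_eq_mul, mul_one]
      by_cases h : i = j
      · rw [h, Matrix.diagonal_apply_eq, Finsupp.single_eq_same]
      · rw [Matrix.diagonal_apply_ne _ h, Finsupp.single_eq_of_ne h]
    calc LinearMap.det g = (LinearMap.toMatrix bM bM g).det := (LinearMap.det_toMatrix _ _).symm
      _ = (Matrix.diagonal (fun i => a (σ.symm i))).det := by rw [hmat]
      _ = ∏ i, a (σ.symm i) := Matrix.det_diagonal
      _ = ∏ i, a i := Equiv.prod_comp σ.symm a
  have hassoc := LinearMap.associated_det_comp_equiv (Submodule.subtype N) e e'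
  rw [hidx, ← hg] at *
  rw [Int.natAbs_eq_iff_associated.mpr hassoc, hdetg]
  exact map_prod Int.natAbsHom a Finset.univ

theorem stmt7 (k : ℕ) (C : Matrix (Fin k) (Fin k) ℤ) (hdet : C.det ≠ 0)
    (n₁ : ℕ) (hn₁ : 0 < n₁)
    (hexp : AddMonoid.exponent ((Fin k → ℤ) ⧸ LinearMap.range (Matrix.toLin' C)) = n₁) :
    Nonempty ((LinearMap.ker (Matrix.toLin' (C.map (Int.cast : ℤ → ZMod n₁))))
        ≃+ ((Fin k → ℤ) ⧸ LinearMap.range (Matrix.toLin' C))) ∧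
    Nat.card (LinearMap.ker (Matrix.toLin' (C.map (Int.cast : ℤ → ZMod n₁))))
      = C.det.natAbs := by
  classical
  haveI : NeZero n₁ := ⟨hn₁.ne'⟩
  set φ := Matrix.toLin' C with hφ
  set N := LinearMap.range φ with hNdef
  set K := LinearMap.ker (Matrix.toLin' (C.map (Int.cast : ℤ → ZMod n₁))) with hKdef
  have hmv0 : ∀ v : Fin k → ℤ, C.mulVec v = 0 → v = 0 := fun v hv =>
    Matrix.eq_zero_of_mulVec_eq_zero hdet hv
  have hinj : Function.Injective φ := by
    intro x y h
    have hx : C.mulVec x = C.mulVec y := by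
      simpa [hφ, Matrix.toLin'_apply] using h
    have h0 : C.mulVec (x - y) = 0 := by
      rw [Matrix.mulVec_sub, hx, sub_self]
    exact sub_eq_zero.mp (hmv0 _ h0)
  -- n₁ kills the cokernel
  have hmem : ∀ y : Fin k → ℤ, (n₁ : ℤ) • y ∈ N := by
    intro y
    have h1 : n₁ • (Submodule.Quotient.mk y : (Fin k → ℤ) ⧸ N) = 0 := by
      rw [← hexp]; exact AddMonoid.exponent_nsmul_eq_zero _
    have h2 : (Submodule.Quotient.mk ((n₁ : ℤ) • y) : (Fin k → ℤ) ⧸ N) = 0 := by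
      rw [Submodule.Quotient.mk_smul, natCast_zsmul]; exact h1
    exact (Submodule.Quotient.mk_eq_zero N).mp h2
  -- the matrix B with C * B = n₁ • 1
  have hBex : ∀ j : Fin k, ∃ b : Fin k → ℤ, C.mulVec b = (n₁ : ℤ) • Pi.single j 1 := by
    intro j
    obtain ⟨b, hb⟩ := hmem (Pi.single j 1)
    exact ⟨b, by simpa [hφ, Matrix.toLin'_apply] using hb⟩
  choose b hb using hBex
  set B : Matrix (Fin k) (Fin k) ℤ := Matrix.of (fun i j => b j i) with hBdef
  have hCB : C * B = (n₁ : ℤ) • (1 : Matrix (Fin k) (Fin k) ℤ) := by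
    ext i j
    have h := congrFun (hb j) i
    simp only [Matrix.mulVec, dotProduct, Pi.smul_apply, Pi.single_apply, smul_eq_mul,
      mul_ite, mul_one, mul_zero] at h
    simp only [Matrix.mul_apply, hBdef, Matrix.of_apply, Matrix.smul_apply, Matrix.one_apply,
      smul_eq_mul, mul_ite, mul_one, mul_zero]
    rw [h]
  have hBC : ∀ x : Fin k → ℤ, (B * C).mulVec x = (n₁ : ℤ) • x := by
    intro x
    have h1 : C.mulVec ((B * C).mulVec x) = C.mulVec ((n₁ : ℤ) • x) := by
      rw [Matrix.mulVec_mulVec, ← Matrix.mul_assoc, hCB, Matrix.mulVec_smul,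
        Matrix.smul_mul, Matrix.one_mul]
      rw [Matrix.smul_mulVec]
    have h0 : C.mulVec ((B * C).mulVec x - (n₁ : ℤ) • x) = 0 := by
      rw [Matrix.mulVec_sub, h1, sub_self]
    exact sub_eq_zero.mp (hmv0 _ h0)
  -- the cast map
  set castF : (Fin k → ℤ) → (Fin k → ZMod n₁) :=
    fun v i => ((v i : ℤ) : ZMod n₁) with hcastF
  have hcast : ∀ (M' : Matrix (Fin k) (Fin k) ℤ) (v : Fin k → ℤ),
      castF (M'.mulVec v) = (M'.map (Int.cast : ℤ → ZMod n₁)).mulVec (castF v) := by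
    intro M' v
    funext i
    exact RingHom.map_mulVec ((Int.castRingHom (ZMod n₁))) M' v i
  have hcast_smul : ∀ v : Fin k → ℤ, castF ((n₁ : ℤ) • v) = 0 := by
    intro v
    funext i
    simp [hcastF, ZMod.natCast_self]
  -- the homomorphism g
  set g : (Fin k → ℤ) →+ (Fin k → ZMod n₁) :=
    AddMonoidHom.mk' (fun y => castF (B.mulVec y)) (by
      intro y z
      funext i
      simp [hcastF, Matrix.mulVec_add]) with hgdef
  set g' : (Fin k → ℤ) →ₗ[ℤ] (Fin k → ZMod n₁) := g.toIntLinearMap with hg'def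
  have hker : N ≤ LinearMap.ker g' := by
    rintro _ ⟨z, rfl⟩
    have : g' (φ z) = castF (B.mulVec (C.mulVec z)) := by
      simp [hg'def, hgdef, hφ, Matrix.toLin'_apply]
    rw [LinearMap.mem_ker, this, Matrix.mulVec_mulVec, hBC, hcast_smul]
  set ψ : ((Fin k → ℤ) ⧸ N) →ₗ[ℤ] (Fin k → ZMod n₁) := Submodule.liftQ N g' hker with hψdef
  have hψmk : ∀ y : Fin k → ℤ, ψ (Submodule.Quotient.mk y) = castF (B.mulVec y) := by
    intro y; rfl
  have himg : ∀ q : (Fin k → ℤ) ⧸ N, ψ q ∈ K := by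
    intro q
    obtain ⟨y, rfl⟩ := Submodule.Quotient.mk_surjective N q
    rw [hψmk, hKdef, LinearMap.mem_ker, Matrix.toLin'_apply, ← hcast, Matrix.mulVec_mulVec,
      hCB, Matrix.smul_mulVec, Matrix.one_mulVec]
    exact hcast_smul y
  set F : ((Fin k → ℤ) ⧸ N) →+ K :=
    AddMonoidHom.codRestrict ψ.toAddMonoidHom K himg with hFdef
  have hFmk : ∀ y : Fin k → ℤ, (F (Submodule.Quotient.mk y) : Fin k → ZMod n₁)
      = castF (B.mulVec y) := by
    intro y; rfl
  have hdvd_of_cast : ∀ v : Fin k → ℤ, castF v = 0 → ∃ z : Fin k → ℤ, v = (n₁ : ℤ) • z := by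
    intro v hv
    have hdvd : ∀ i, (n₁ : ℤ) ∣ v i := by
      intro i
      have := congrFun hv i
      exact (ZMod.intCast_zmod_eq_zero_iff_dvd _ _).mp this
    choose z hz using hdvd
    exact ⟨z, funext fun i => by rw [hz i]; simp⟩
  have hFinj : Function.Injective F := by
    rw [injective_iff_map_eq_zero]
    intro q hq
    obtain ⟨y, rfl⟩ := Submodule.Quotient.mk_surjective N q
    have hv : castF (B.mulVec y) = 0 := by
      rw [← hFmk y, hq]; rfl
    obtain ⟨z, hz⟩ := hdvd_of_cast _ hv
    have h1 : (n₁ : ℤ) • y = (n₁ : ℤ) • C.mulVec z := by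
      have h2 : C.mulVec (B.mulVec y) = (n₁ : ℤ) • y := by
        rw [Matrix.mulVec_mulVec, hCB, Matrix.smul_mulVec, Matrix.one_mulVec]
      rw [← h2, hz, Matrix.mulVec_smul]
    have h3 : y = C.mulVec z :=
      smul_right_injective (Fin k → ℤ) (by exact_mod_cast hn₁.ne' : (n₁ : ℤ) ≠ 0) h1
    rw [Submodule.Quotient.mk_eq_zero]
    exact ⟨z, by rw [hφ, Matrix.toLin'_apply, h3]⟩
  have hFsurj : Function.Surjective F := by
    rintro ⟨x, hx⟩
    set xt : Fin k → ℤ := fun i => ((x i).val : ℤ) with hxt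
    have hxcast : castF xt = x := by
      funext i
      simp only [hcastF, hxt, Int.cast_natCast]
      exact ZMod.natCast_rightInverse (x i)
    have hCx : castF (C.mulVec xt) = 0 := by
      rw [hcast, hxcast]
      rw [hKdef, LinearMap.mem_ker, Matrix.toLin'_apply] at hx
      exact hx
    obtain ⟨w, hw⟩ := hdvd_of_cast _ hCx
    have h1 : (n₁ : ℤ) • B.mulVec w = (n₁ : ℤ) • xt := by
      have h2 : B.mulVec ((n₁ : ℤ) • w) = (n₁ : ℤ) • xt := by
        rw [← hw, Matrix.mulVec_mulVec, hBC]
      rw [← h2, Matrix.mulVec_smul]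
    have h3 : B.mulVec w = xt :=
      smul_right_injective (Fin k → ℤ) (by exact_mod_cast hn₁.ne' : (n₁ : ℤ) ≠ 0) h1
    refine ⟨Submodule.Quotient.mk w, ?_⟩
    apply Subtype.ext
    rw [hFmk, h3, hxcast]
  set eKQ : K ≃+ ((Fin k → ℤ) ⧸ N) := (AddEquiv.ofBijective F ⟨hFinj, hFsurj⟩).symm with heKQ
  refine ⟨⟨eKQ⟩, ?_⟩
  have h1 : Nat.card K = Nat.card ((Fin k → ℤ) ⧸ N) := Nat.card_congr eKQ.toEquiv
  have hkq : (N.mkQ.toAddMonoidHom).ker = N.toAddSubgroup := by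
    ext x
    simp [AddMonoidHom.mem_ker, Submodule.Quotient.mk_eq_zero]
  have h2 : Nat.card ((Fin k → ℤ) ⧸ N) = N.toAddSubgroup.index := by
    have hsurj : Function.Surjective (N.mkQ.toAddMonoidHom) := Submodule.mkQ_surjective N
    calc Nat.card ((Fin k → ℤ) ⧸ N)
        = Nat.card ((Fin k → ℤ) ⧸ (N.mkQ.toAddMonoidHom).ker) :=
          (Nat.card_congr (QuotientAddGroup.quotientKerEquivOfSurjective _ hsurj).toEquiv).symm
      _ = Nat.card ((Fin k → ℤ) ⧸ N.toAddSubgroup) := by rw [hkq]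
      _ = N.toAddSubgroup.index := (AddSubgroup.index_eq_card _).symm
  have h3 : N.toAddSubgroup.index = C.det.natAbs := by
    have haux := aux_index N (LinearEquiv.ofInjective φ hinj)
    have hcomp : (Submodule.subtype N) ∘ₗ
        ((LinearEquiv.ofInjective φ hinj : (Fin k → ℤ) ≃ₗ[ℤ] N) : (Fin k → ℤ) →ₗ[ℤ] N) = φ := by
      ext x
      rfl
    rw [← haux, hcomp, hφ, LinearMap.det_toLin']
  rw [h1, h2, h3]
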